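/- Let v₁ ∈ ℝᵈ be a unit vector and let f₂ be a linear extended function on the subspace {x : v₁ · x = 0}. Define f : ℝᵈ → ℝ̄ by f(x) = +∞ if v₁·x > 0, f(x) = -∞ if v₁·x < 0, and f(x) = f₂(x) if v₁·x = 0. Then f is a linear extended function on ℝᵈ. -/

import Mathlib

/-- A *linear extended function*: scaling and additivity whenever the sum is legal. -/
def IsLinExt {E : Type*} [AddCommGroup E] [Module ℝ E] (f : E → EReal) : Prop :=
  (∀ (α : ℝ) (x : E), f (α • x) = (α : EReal) * f x) ∧
  (∀ x x' : E, ¬ ((f x = ⊤ ∧ f x' = ⊥) ∨ (f x = ⊥ ∧ f x' = ⊤)) →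
    f (x + x') = f x + f x')

/-- An *affine extended function*: a horizontally and vertically shifted linear extended fn. -/
def IsAffExt {E : Type*} [AddCommGroup E] [Module ℝ E] (h : E → EReal) : Prop :=
  ∃ (f : E → EReal) (x₀ : E) (β : ℝ), IsLinExt f ∧ ∀ x, h x = f (x - x₀) + (β : EReal)

theorem stmt_5 (d : ℕ) (v₁ : EuclideanSpace ℝ (Fin d)) (hv : ‖v₁‖ = 1)
    (f₂ f : EuclideanSpace ℝ (Fin d) → EReal)
    (hf₂scale : ∀ (α : ℝ) (x : EuclideanSpace ℝ (Fin d)), (inner ℝ v₁ x : ℝ) = 0 →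
      f₂ (α • x) = (α : EReal) * f₂ x)
    (hf₂add : ∀ x x' : EuclideanSpace ℝ (Fin d),
      (inner ℝ v₁ x : ℝ) = 0 → (inner ℝ v₁ x' : ℝ) = 0 →
      ¬ ((f₂ x = ⊤ ∧ f₂ x' = ⊥) ∨ (f₂ x = ⊥ ∧ f₂ x' = ⊤)) →
      f₂ (x + x') = f₂ x + f₂ x')
    (hf : ∀ x, f x = if 0 < (inner ℝ v₁ x : ℝ) then (⊤ : EReal)
                     else if (inner ℝ v₁ x : ℝ) < 0 then (⊥ : EReal) else f₂ x) :
    IsLinExt f := by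
  constructor
  · intro α x
    have hs : (inner ℝ v₁ (α • x) : ℝ) = α * inner ℝ v₁ x := real_inner_smul_right v₁ x α
    rw [hf (α • x), hf x, hs]
    rcases lt_trichotomy α 0 with hα | hα | hα
    · rcases lt_trichotomy (inner ℝ v₁ x : ℝ) 0 with h | h | h
      · rw [if_pos (mul_pos_of_neg_of_neg hα h), if_neg (by linarith), if_pos h,
          EReal.coe_mul_bot_of_neg hα]
      · rw [if_neg (by nlinarith), if_neg (by nlinarith), if_neg (by linarith),
          if_neg (by linarith), hf₂scale α x h]
      · rw [if_neg (by nlinarith), if_pos (by nlinarith), if_pos h,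
          EReal.coe_mul_top_of_neg hα]
    · subst hα
      rw [if_neg (by norm_num), if_neg (by norm_num)]
      have h0 : f₂ ((0:ℝ) • x) = (0 : EReal) * f₂ x := by
        rw [zero_smul]
        simpa using hf₂scale 0 0 (by simp)
      rw [h0, EReal.coe_zero, zero_mul, zero_mul]
    · rcases lt_trichotomy (inner ℝ v₁ x : ℝ) 0 with h | h | h
      · rw [if_neg (by nlinarith), if_pos (by nlinarith), if_neg (by linarith),
          if_pos h, EReal.coe_mul_bot_of_pos hα]
      · rw [if_neg (by nlinarith), if_neg (by nlinarith), if_neg (by linarith),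
          if_neg (by linarith), hf₂scale α x h]
      · rw [if_pos (by nlinarith), if_pos h, EReal.coe_mul_top_of_pos hα]
  · intro x x' hleg
    have hs : (inner ℝ v₁ (x + x') : ℝ) = inner ℝ v₁ x + inner ℝ v₁ x' := inner_add_right v₁ x x'
    rw [hf x, hf x'] at hleg
    rw [hf (x + x'), hf x, hf x', hs]
    rcases lt_trichotomy (inner ℝ v₁ x : ℝ) 0 with h | h | h <;>
      rcases lt_trichotomy (inner ℝ v₁ x' : ℝ) 0 with h' | h' | h'
    · rw [if_neg (by linarith), if_pos (by linarith), if_neg (by linarith), if_pos h,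
        if_neg (by linarith), if_pos h', EReal.bot_add]
    · rw [if_neg (by linarith), if_pos (by linarith), if_neg (by linarith), if_pos h,
        if_neg (by linarith), if_neg (by linarith), EReal.bot_add]
    · exfalso
      rw [if_neg (by linarith), if_pos h, if_pos h'] at hleg
      exact hleg (Or.inr ⟨rfl, rfl⟩)
    · rw [if_neg (by linarith), if_pos (by linarith), if_neg (by linarith),
        if_neg (by linarith), if_neg (by linarith), if_pos h', EReal.add_bot]
    · rw [if_neg (by linarith), if_neg (by linarith), if_neg (by linarith),
        if_neg (by linarith)] at hleg
      rw [if_neg (by linarith), if_neg (by linarith), if_neg (by linarith),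
        if_neg (by linarith), if_neg (by linarith), if_neg (by linarith)]
      exact hf₂add x x' h h' hleg
    · rw [if_neg (by linarith), if_neg (by linarith), if_pos h'] at hleg
      rw [if_pos (by linarith), if_neg (by linarith), if_neg (by linarith), if_pos h']
      have hne : f₂ x ≠ ⊥ := fun hc => hleg (Or.inr ⟨hc, rfl⟩)
      exact (EReal.add_top_of_ne_bot hne).symm
    · exfalso
      rw [if_pos h, if_neg (by linarith), if_pos h'] at hleg
      exact hleg (Or.inl ⟨rfl, rfl⟩)
    · rw [if_pos h, if_neg (by linarith), if_neg (by linarith)] at hleg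
      rw [if_pos (by linarith), if_pos h, if_neg (by linarith), if_neg (by linarith)]
      have hne : f₂ x' ≠ ⊥ := fun hc => hleg (Or.inl ⟨rfl, hc⟩)
      exact (EReal.top_add_of_ne_bot hne).symm
    · rw [if_pos (by linarith), if_pos h, if_pos h',
        EReal.top_add_of_ne_bot top_ne_bot]
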